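/- Let d ≥ 1 and let f : ℝ^d → ℝ be continuous and coercive. Define f*(x) = sup_{y ∈ ℝ^d} (⟨x,y⟩ − f(y)) and f**(y) = sup_{x ∈ ℝ^d} (⟨x,y⟩ − f*(x)) (both are finite real-valued). If f** is strictly convex at a point y ∈ ℝ^d, then f**(y) = f(y). -/
import Mathlib


open scoped RealInnerProductSpace
noncomputable section

/-- Legendre transform: `f*(x) = sup_y (⟨x,y⟩ − f(y))`. -/
def conj {d : ℕ} (f : EuclideanSpace ℝ (Fin d) → ℝ)
    (x : EuclideanSpace ℝ (Fin d)) : ℝ :=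
  ⨆ y : EuclideanSpace ℝ (Fin d), (⟪x, y⟫ - f y)

section Aux

variable {d : ℕ} {f : EuclideanSpace ℝ (Fin d) → ℝ}

/-- Coercive continuous functions: the sup defining `conj f x` is attained. -/
lemma exists_max (hcont : Continuous f)
    (hcoer : ∀ M : ℝ, ∃ R : ℝ, ∀ z, R ≤ ‖z‖ → M ≤ f z / ‖z‖)
    (x : EuclideanSpace ℝ (Fin d)) :
    ∃ z₀, ∀ z, ⟪x, z⟫ - f z ≤ ⟪x, z₀⟫ - f z₀ := by
  obtain ⟨R, hR⟩ := hcoer (‖x‖ + |f 0| + 1)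
  set R' : ℝ := max R 1 with hR'def
  have hR'1 : (1 : ℝ) ≤ R' := le_max_right _ _
  have hg : Continuous fun z : EuclideanSpace ℝ (Fin d) => ⟪x, z⟫ - f z :=
    (continuous_const.inner continuous_id).sub hcont
  have hne : (Metric.closedBall (0 : EuclideanSpace ℝ (Fin d)) R').Nonempty :=
    ⟨0, by simp; linarith⟩
  obtain ⟨z₀, hz₀mem, hz₀max⟩ :=
    (isCompact_closedBall (0 : EuclideanSpace ℝ (Fin d)) R').exists_isMaxOn hne
      hg.continuousOn
  refine ⟨z₀, fun z => ?_⟩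
  by_cases hz : z ∈ Metric.closedBall (0 : EuclideanSpace ℝ (Fin d)) R'
  · exact hz₀max hz
  · -- z outside the ball
    have hznorm : R' < ‖z‖ := by
      simpa [Metric.mem_closedBall, dist_zero_right, not_le] using hz
    have hz1 : (1 : ℝ) ≤ ‖z‖ := le_trans hR'1 hznorm.le
    have hzpos : (0 : ℝ) < ‖z‖ := lt_of_lt_of_le one_pos hz1
    have hfz : (‖x‖ + |f 0| + 1) * ‖z‖ ≤ f z := by
      have := hR z (le_trans (le_max_left R 1) hznorm.le)
      calc (‖x‖ + |f 0| + 1) * ‖z‖ ≤ (f z / ‖z‖) * ‖z‖ := by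
            apply mul_le_mul_of_nonneg_right this hzpos.le
        _ = f z := div_mul_cancel₀ _ hzpos.ne'
    have hinner : ⟪x, z⟫ ≤ ‖x‖ * ‖z‖ := real_inner_le_norm x z
    have hle0 : ⟪x, z⟫ - f z ≤ ⟪x, (0 : EuclideanSpace ℝ (Fin d))⟫ - f 0 := by
      have h0 : ⟪x, (0 : EuclideanSpace ℝ (Fin d))⟫ = 0 := inner_zero_right x
      rw [h0]
      have : (|f 0| + 1) * ‖z‖ ≥ (|f 0| + 1) * 1 := by
        apply mul_le_mul_of_nonneg_left hz1; positivity
      have habs : f 0 ≤ |f 0| := le_abs_self _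
      nlinarith
    exact hle0.trans (hz₀max (by simp; linarith))

lemma bddAbove_conj (hcont : Continuous f)
    (hcoer : ∀ M : ℝ, ∃ R : ℝ, ∀ z, R ≤ ‖z‖ → M ≤ f z / ‖z‖)
    (x : EuclideanSpace ℝ (Fin d)) :
    BddAbove (Set.range fun z : EuclideanSpace ℝ (Fin d) => ⟪x, z⟫ - f z) := by
  obtain ⟨z₀, hz₀⟩ := exists_max hcont hcoer x
  exact ⟨⟪x, z₀⟫ - f z₀, by rintro _ ⟨z, rfl⟩; exact hz₀ z⟩

lemma conj_ge (hcont : Continuous f)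
    (hcoer : ∀ M : ℝ, ∃ R : ℝ, ∀ z, R ≤ ‖z‖ → M ≤ f z / ‖z‖)
    (x z : EuclideanSpace ℝ (Fin d)) :
    ⟪x, z⟫ - f z ≤ conj f x :=
  le_ciSup (bddAbove_conj hcont hcoer x) z

/-- each term in the biconjugate sup is ≤ f z -/
lemma biconj_term_le (hcont : Continuous f)
    (hcoer : ∀ M : ℝ, ∃ R : ℝ, ∀ z, R ≤ ‖z‖ → M ≤ f z / ‖z‖)
    (z w : EuclideanSpace ℝ (Fin d)) :
    ⟪z, w⟫ - conj f w ≤ f z := by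
  have h := conj_ge hcont hcoer w z
  have : ⟪z, w⟫ = ⟪w, z⟫ := real_inner_comm w z
  linarith

lemma bddAbove_biconj (hcont : Continuous f)
    (hcoer : ∀ M : ℝ, ∃ R : ℝ, ∀ z, R ≤ ‖z‖ → M ≤ f z / ‖z‖)
    (z : EuclideanSpace ℝ (Fin d)) :
    BddAbove (Set.range fun w : EuclideanSpace ℝ (Fin d) => ⟪z, w⟫ - conj f w) :=
  ⟨f z, by rintro _ ⟨w, rfl⟩; exact biconj_term_le hcont hcoer z w⟩

lemma biconj_le (hcont : Continuous f)
    (hcoer : ∀ M : ℝ, ∃ R : ℝ, ∀ z, R ≤ ‖z‖ → M ≤ f z / ‖z‖)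
    (z : EuclideanSpace ℝ (Fin d)) :
    conj (conj f) z ≤ f z :=
  ciSup_le (biconj_term_le hcont hcoer z)

end Aux

theorem stmt8 (d : ℕ) (hd : 1 ≤ d)
    (f : EuclideanSpace ℝ (Fin d) → ℝ)
    (hcont : Continuous f)
    (hcoer : ∀ M : ℝ, ∃ R : ℝ, ∀ z, R ≤ ‖z‖ → M ≤ f z / ‖z‖)
    (y : EuclideanSpace ℝ (Fin d))
    (hstrict : ∃ x : EuclideanSpace ℝ (Fin d),
      (∀ z, conj (conj f) z ≥ conj (conj f) y + ⟪x, z - y⟫) ∧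
      (∀ z, z ≠ y → conj (conj f) y - ⟪x, y⟫ < conj (conj f) z - ⟪x, z⟫)) :
    conj (conj f) y = f y := by
  obtain ⟨x, hsub, hstr⟩ := hstrict
  -- f*(x) ≤ ⟪x,y⟫ - f**(y)
  have h1 : conj f x ≤ ⟪x, y⟫ - conj (conj f) y := by
    apply ciSup_le
    intro z
    have hb : conj (conj f) z ≤ f z := biconj_le hcont hcoer z
    have hs := hsub z
    have hin : ⟪x, z - y⟫ = ⟪x, z⟫ - ⟪x, y⟫ := inner_sub_right x z y
    linarith
  -- f*(x) ≥ ⟪x,y⟫ - f**(y)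
  have h2 : ⟪x, y⟫ - conj (conj f) y ≤ conj f x := by
    have h : ⟪y, x⟫ - conj f x ≤ conj (conj f) y :=
      le_ciSup (bddAbove_biconj hcont hcoer y) x
    have hin : ⟪y, x⟫ = ⟪x, y⟫ := real_inner_comm x y
    linarith
  have heq : conj f x = ⟪x, y⟫ - conj (conj f) y := le_antisymm h1 h2
  -- sup attained at z₀
  obtain ⟨z₀, hz₀⟩ := exists_max hcont hcoer x
  have hconjx : conj f x = ⟪x, z₀⟫ - f z₀ :=
    le_antisymm (ciSup_le hz₀) (conj_ge hcont hcoer x z₀)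
  have hfz₀ : f z₀ = ⟪x, z₀⟫ - ⟪x, y⟫ + conj (conj f) y := by
    rw [heq] at hconjx; linarith
  have hkey : conj (conj f) z₀ - ⟪x, z₀⟫ ≤ conj (conj f) y - ⟪x, y⟫ := by
    have := biconj_le hcont hcoer z₀
    linarith
  have hz₀y : z₀ = y := by
    by_contra h
    exact absurd hkey (not_le.mpr (hstr z₀ h))
  rw [hz₀y] at hfz₀
  linarith
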